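/- arXiv:1811.01894 — 2 statements merged into one kernel-verified Lean document; each statement's English description precedes it below -/
import Mathlib

section
/- For s, t > 0 and r ≥ 2√(st), the supremum over λ > 0 and z > 0 of {λr - t(λ²/2 + zλ) - s·log((z+λ)/z)} equals r√(r²-4st)/(2t) + s·log((r-√(r²-4st))/(r+√(r²-4st))). -/
namespace RateFnAux

noncomputable def phi (s t r x : ℝ) : ℝ := r * x - t * x ^ 2 / 2 - s * Real.log x

lemma phi_hasDerivAt (s t r : ℝ) {x : ℝ} (hx : x ≠ 0) :
    HasDerivAt (phi s t r) (r - t * x - s / x) x := by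
  have h := (((hasDerivAt_id x).const_mul r).sub
      (((hasDerivAt_pow 2 x).const_mul t).div_const 2)).sub
      ((Real.hasDerivAt_log hx).const_mul s)
  have e : phi s t r = (((fun y => r * id y) - fun x => t * x ^ 2 / 2) - fun y => s * Real.log y) := by
    funext y; simp [phi]
  rw [e]
  refine h.congr_deriv ?_
  norm_num
  field_simp

lemma phi_deriv (s t r : ℝ) {x : ℝ} (hx : x ≠ 0) :
    deriv (phi s t r) x = r - t * x - s / x :=
  (phi_hasDerivAt s t r hx).deriv

lemma phi_contOn (s t r : ℝ) {A : Set ℝ} (hA : ∀ x ∈ A, x ≠ 0) :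
    ContinuousOn (phi s t r) A := fun x hx =>
  ((phi_hasDerivAt s t r (hA x hx)).continuousAt).continuousWithinAt

lemma phi_diffOn (s t r : ℝ) {A : Set ℝ} (hA : ∀ x ∈ A, x ≠ 0) :
    DifferentiableOn ℝ (phi s t r) A := fun x hx =>
  ((phi_hasDerivAt s t r (hA x hx)).differentiableAt).differentiableWithinAt

end RateFnAux

open RateFnAux in
theorem rate_function_legendre_transform_closed_form (s t r : ℝ) (hs : 0 < s) (ht : 0 < t)
    (hr : 2 * Real.sqrt (s * t) ≤ r) :
    sSup {y : ℝ | ∃ lam > 0, ∃ z > 0,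
        y = lam * r - t * (lam ^ 2 / 2 + z * lam) - s * Real.log ((z + lam) / z)} =
      r * Real.sqrt (r ^ 2 - 4 * s * t) / (2 * t) +
        s * Real.log ((r - Real.sqrt (r ^ 2 - 4 * s * t)) /
          (r + Real.sqrt (r ^ 2 - 4 * s * t))) := by
  have hst : 0 < s * t := mul_pos hs ht
  have hsqst : (0:ℝ) < Real.sqrt (s * t) := Real.sqrt_pos.2 hst
  have hr0 : 0 < r := lt_of_lt_of_le (by linarith) hr
  have hD : 0 ≤ r ^ 2 - 4 * s * t := by
    nlinarith [Real.sq_sqrt hst.le, Real.sqrt_nonneg (s * t)]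
  set q := Real.sqrt (r ^ 2 - 4 * s * t) with hqdef
  have hq2 : q ^ 2 = r ^ 2 - 4 * s * t := Real.sq_sqrt hD
  have hq0 : 0 ≤ q := Real.sqrt_nonneg _
  have hqr : q < r := by nlinarith
  set a := (r - q) / (2 * t) with hadef
  set b := (r + q) / (2 * t) with hbdef
  have ha : 0 < a := by
    apply div_pos (by linarith) (by linarith)
  have hb : 0 < b := by
    apply div_pos (by linarith) (by linarith)
  have hab : a ≤ b := by
    apply div_le_div_of_nonneg_right ?_ (by linarith)
    · linarith
  set φ := phi s t r with hφdef
  have ht2 : (0:ℝ) < 2 * t := by linarith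
  have hsum : a + b = r / t := by
    rw [hadef, hbdef]
    field_simp
    ring
  have hprod : a * b = s / t := by
    rw [hadef, hbdef]
    field_simp
    linear_combination (-1) * hq2
  -- derivative sign factorization
  have hkey : ∀ x : ℝ, x ≠ 0 → r - t * x - s / x = t * (x - a) * (b - x) / x := by
    intro x hx
    have e1 : t * (x - a) * (b - x) = r * x - t * x ^ 2 - s := by
      have e2 : t * (x - a) * (b - x) = t * ((a + b) * x) - t * x ^ 2 - t * (a * b) := by
        ring
      rw [e2, hsum, hprod]
      field_simp
    rw [e1]
    field_simp
  -- monotonicity lemmas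
  have hanti1 : AntitoneOn φ (Set.Ioc 0 a) := by
    apply antitoneOn_of_deriv_nonpos (convex_Ioc 0 a)
    · exact phi_contOn s t r (fun x hx => (hx.1).ne')
    · rw [interior_Ioc]
      exact phi_diffOn s t r (fun x hx => (hx.1).ne')
    · rw [interior_Ioc]
      intro x hx
      rw [phi_deriv s t r hx.1.ne', hkey x hx.1.ne']
      have h1 : x - a < 0 := by linarith [hx.2]
      have h2 : 0 < b - x := by linarith [hx.2, hab]
      have : t * (x - a) * (b - x) < 0 := by
        rw [mul_assoc]
        exact mul_neg_of_pos_of_neg ht (mul_neg_of_neg_of_pos h1 h2)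
      exact le_of_lt (div_neg_of_neg_of_pos this hx.1)
  have hanti2 : AntitoneOn φ (Set.Ici b) := by
    apply antitoneOn_of_deriv_nonpos (convex_Ici b)
    · exact phi_contOn s t r (fun x hx => (lt_of_lt_of_le hb hx).ne')
    · rw [interior_Ici]
      exact phi_diffOn s t r (fun x hx => (lt_trans hb hx).ne')
    · rw [interior_Ici]
      intro x hx
      have hx0 : 0 < x := lt_trans hb hx
      rw [phi_deriv s t r hx0.ne', hkey x hx0.ne']
      have hbx : b < x := hx
      have h1 : 0 < x - a := by linarith [hab]
      have h2 : b - x < 0 := by linarith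
      have : t * (x - a) * (b - x) < 0 := by
        rw [mul_assoc]
        exact mul_neg_of_pos_of_neg ht (mul_neg_of_pos_of_neg h1 h2)
      exact le_of_lt (div_neg_of_neg_of_pos this hx0)
  have hmono : MonotoneOn φ (Set.Icc a b) := by
    apply monotoneOn_of_deriv_nonneg (convex_Icc a b)
    · exact phi_contOn s t r (fun x hx => (lt_of_lt_of_le ha hx.1).ne')
    · rw [interior_Icc]
      exact phi_diffOn s t r (fun x hx => (lt_trans ha hx.1).ne')
    · rw [interior_Icc]
      intro x hx
      have hx0 : 0 < x := lt_trans ha hx.1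
      rw [phi_deriv s t r hx0.ne', hkey x hx0.ne']
      have h1 : 0 < x - a := by linarith [hx.1]
      have h2 : 0 < b - x := by linarith [hx.2]
      positivity
  -- rewriting set elements via φ
  have hform : ∀ lam z : ℝ, 0 < lam → 0 < z →
      lam * r - t * (lam ^ 2 / 2 + z * lam) - s * Real.log ((z + lam) / z)
        = φ (z + lam) - φ z := by
    intro lam z hlam hz
    have hzl : (0:ℝ) < z + lam := by linarith
    rw [Real.log_div hzl.ne' hz.ne']
    simp only [hφdef, phi]
    ring
  set S := {y : ℝ | ∃ lam > 0, ∃ z > 0,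
      y = lam * r - t * (lam ^ 2 / 2 + z * lam) - s * Real.log ((z + lam) / z)} with hSdef
  have hSne : S.Nonempty := by
    refine ⟨_, ⟨1, one_pos, 1, one_pos, rfl⟩⟩
  have hM0 : 0 ≤ φ b - φ a := by
    have := hmono (Set.left_mem_Icc.2 hab) (Set.right_mem_Icc.2 hab) hab
    linarith
  have hub : ∀ y ∈ S, y ≤ φ b - φ a := by
    rintro y ⟨lam, hlam, z, hz, rfl⟩
    rw [hform lam z hlam hz]
    have hzl : z < z + lam := by linarith
    have hzl0 : (0:ℝ) < z + lam := by linarith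
    by_cases h1 : z + lam ≤ a
    · have : φ (z + lam) ≤ φ z :=
        hanti1 ⟨hz, by linarith⟩ ⟨hzl0, h1⟩ (le_of_lt hzl)
      linarith
    · by_cases h2 : b ≤ z
      · have : φ (z + lam) ≤ φ z :=
          hanti2 h2 (by simp only [Set.mem_Ici]; linarith) (le_of_lt hzl)
        linarith
      · push_neg at h1 h2
        have hu : φ (z + lam) ≤ φ b := by
          by_cases h3 : z + lam ≤ b
          · exact hmono ⟨le_of_lt h1, h3⟩ (Set.right_mem_Icc.2 hab) h3
          · push_neg at h3
            exact hanti2 Set.self_mem_Ici (le_of_lt h3) (le_of_lt h3)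
        have hl : φ a ≤ φ z := by
          by_cases h4 : a ≤ z
          · exact hmono (Set.left_mem_Icc.2 hab) ⟨h4, le_of_lt h2⟩ h4
          · push_neg at h4
            exact hanti1 ⟨hz, le_of_lt h4⟩ (Set.right_mem_Ioc.2 ha) (le_of_lt h4)
        linarith
  have hbdd : BddAbove S := ⟨φ b - φ a, hub⟩
  -- closed form identity
  have hrq1 : (0:ℝ) < r - q := by linarith
  have hrq2 : (0:ℝ) < r + q := by linarith
  have hM : φ b - φ a = r * q / (2 * t) + s * Real.log ((r - q) / (r + q)) := by
    have hla : Real.log a = Real.log (r - q) - Real.log (2 * t) := by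
      rw [hadef, Real.log_div hrq1.ne' (by positivity)]
    have hlb : Real.log b = Real.log (r + q) - Real.log (2 * t) := by
      rw [hbdef, Real.log_div hrq2.ne' (by positivity)]
    have hlr : Real.log ((r - q) / (r + q)) = Real.log (r - q) - Real.log (r + q) :=
      Real.log_div hrq1.ne' hrq2.ne'
    have hpoly : r * b - t * b ^ 2 / 2 - (r * a - t * a ^ 2 / 2) = r * q / (2 * t) := by
      rw [hadef, hbdef]
      field_simp
      ring
    simp only [hφdef, phi] at *
    rw [hla, hlb, hlr]
    linarith [hpoly]
  rcases eq_or_lt_of_le hq0 with hq | hq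
  · -- q = 0 case
    have hab' : a = b := by rw [hadef, hbdef, ← hq]; ring_nf
    have hM' : φ b - φ a = 0 := by rw [hab']; ring
    have hrhs : r * q / (2 * t) + s * Real.log ((r - q) / (r + q)) = 0 := by
      rw [← hq]
      simp [div_self hr0.ne']
    rw [hrhs]
    apply le_antisymm
    · refine csSup_le hSne (fun y hy => ?_)
      have := hub y hy
      linarith [hM']
    · -- approximating sequence
      have hseq : ∀ n : ℕ, φ (a + 1 / (n + 1)) - φ a ∈ S := by
        intro n
        refine ⟨1 / (n + 1), by positivity, a, ha, ?_⟩
        rw [hform _ _ (by positivity) ha]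
      have hca : ContinuousAt φ a := (phi_hasDerivAt s t r ha.ne').continuousAt
      have hlim : Filter.Tendsto (fun n : ℕ => φ (a + 1 / (n + 1)) - φ a)
          Filter.atTop (nhds 0) := by
        have h1 : Filter.Tendsto (fun n : ℕ => a + 1 / ((n : ℝ) + 1))
            Filter.atTop (nhds a) := by
          have := tendsto_one_div_add_atTop_nhds_zero_nat (𝕜 := ℝ)
          have h2 := Filter.Tendsto.const_add a this
          simpa using h2
        have h3 := (hca.tendsto.comp h1).sub_const (φ a)
        simpa using h3
      refine le_of_tendsto hlim (Filter.Eventually.of_forall fun n => ?_)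
      exact le_csSup hbdd (hseq n)
  · -- q > 0 case: supremum attained
    have hmem : φ b - φ a ∈ S := by
      have hba : 0 < b - a := by
        rw [hadef, hbdef]
        rw [div_sub_div_same]
        apply div_pos (by linarith) (by linarith)
      refine ⟨b - a, hba, a, ha, ?_⟩
      rw [hform _ _ hba ha]
      ring_nf
    have : IsGreatest S (φ b - φ a) := ⟨hmem, hub⟩
    rw [this.csSup_eq, hM]
end

section
/- For μ > 0, λ ∈ (0, μ), and s, t > 0: the maximum of {t(λ²/2 + μλ) + s·log((μ+λ)/μ)} and {t(−λ²/2 + μλ) + s·log(μ/(μ−λ))} equals max( sup_{0≤r≤t} {r(λμ + λ²/2) + Λ_{s,t−r}(λ)}, sup_{0≤u≤s} {u·log(μ/(μ−λ)) + Λ_{s−u,t}(λ)} ), where Λ_{s,u}(λ) = ∫₀^λ √(4su + (ux)²) dx for s, u > 0, Λ_{s,0}(λ) = 0, Λ_{0,u}(λ) = λ²u/2. -/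
/-- The point-to-point Lyapunov exponent `Λ_{s,u}(λ)` of Brownian directed percolation in
closed integral form; this agrees with the continuous boundary extensions `Λ_{s,0}(λ) = 0`
and `Λ_{0,u}(λ) = λ²u/2`. -/
noncomputable def Lam (s u lam : ℝ) : ℝ :=
  ∫ x in (0:ℝ)..lam, Real.sqrt (4 * s * u + (u * x) ^ 2)

open Real intervalIntegral
private lemma sqrt_cx_pos (c x : ℝ) (hc : 0 < c) : 0 < Real.sqrt (c + x^2) :=
  Real.sqrt_pos.2 (by positivity)

private lemma hd_sqrt (c : ℝ) (hc : 0 < c) (x : ℝ) :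
    HasDerivAt (fun y : ℝ => Real.sqrt (c + y^2)) (x / Real.sqrt (c + x^2)) x := by
  have h : HasDerivAt (fun y : ℝ => c + y^2) (2*x) x := by
    simpa using ((hasDerivAt_pow 2 x).const_add c)
  have h2 := h.sqrt (by positivity : c + x^2 ≠ 0)
  convert h2 using 1
  have := (sqrt_cx_pos c x hc).ne'
  field_simp

private lemma hd_xsqrt (c : ℝ) (hc : 0 < c) (x : ℝ) :
    HasDerivAt (fun y : ℝ => y * Real.sqrt (c + y^2))
      ((c + 2*x^2) / Real.sqrt (c + x^2)) x := by
  have h := (hasDerivAt_id x).mul (hd_sqrt c hc x)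
  refine h.congr_deriv (Eq.symm ?_)
  simp only [id]
  have hpos := sqrt_cx_pos c x hc
  have hsq : Real.sqrt (c + x^2) ^ 2 = c + x^2 := Real.sq_sqrt (by positivity)
  field_simp
  nlinarith [hsq]

private lemma hd_logsqrt (c : ℝ) (hc : 0 < c) (x : ℝ) :
    HasDerivAt (fun y : ℝ => Real.log (y + Real.sqrt (c + y^2)))
      (1 / Real.sqrt (c + x^2)) x := by
  have hgt : |x| < Real.sqrt (c + x^2) := by
    rw [← Real.sqrt_sq_eq_abs]
    exact Real.sqrt_lt_sqrt (sq_nonneg x) (by linarith)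
  have hpos : 0 < x + Real.sqrt (c + x^2) := by
    cases abs_lt.1 hgt with
    | intro h1 h2 => linarith
  have h := ((hasDerivAt_id x).add (hd_sqrt c hc x)).log hpos.ne'
  refine h.congr_deriv (Eq.symm ?_)
  simp only [Pi.add_apply, id]
  have hp := sqrt_cx_pos c x hc
  have hsq : Real.sqrt (c + x^2) ^ 2 = c + x^2 := Real.sq_sqrt (by positivity)
  field_simp
  nlinarith [hsq]

private lemma cont_sqrt (c : ℝ) : Continuous (fun x : ℝ => Real.sqrt (c + x^2)) :=
  Real.continuous_sqrt.comp (by continuity)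

private lemma cont_slope (c : ℝ) (hc : 0 < c) :
    Continuous (fun x : ℝ => (c + 2*x^2) / (2 * Real.sqrt (c + x^2))) := by
  apply Continuous.div (by continuity) (by
    exact continuous_const.mul (cont_sqrt c))
  intro x
  have := sqrt_cx_pos c x hc
  positivity

private lemma cont_inv (c : ℝ) (hc : 0 < c) :
    Continuous (fun x : ℝ => 1 / Real.sqrt (c + x^2)) := by
  apply Continuous.div continuous_const (cont_sqrt c)
  intro x
  exact (sqrt_cx_pos c x hc).ne'

private lemma integ_sqrt (c lam : ℝ) (hc : 0 < c) :
    ∫ x in (0:ℝ)..lam, Real.sqrt (c + x^2)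
      = lam * Real.sqrt (c + lam^2) / 2
        + c/2 * (Real.log (lam + Real.sqrt (c + lam^2)) - Real.log (Real.sqrt c)) := by
  have key : ∀ x ∈ Set.uIcc (0:ℝ) lam,
      HasDerivAt (fun y : ℝ => y * Real.sqrt (c + y^2) / 2
        + c/2 * Real.log (y + Real.sqrt (c + y^2))) (Real.sqrt (c + x^2)) x := by
    intro x _
    have h := ((hd_xsqrt c hc x).div_const 2).add ((hd_logsqrt c hc x).const_mul (c/2))
    refine h.congr_deriv (Eq.symm ?_)
    have hp := sqrt_cx_pos c x hc
    have hsq : Real.sqrt (c + x^2) ^ 2 = c + x^2 := Real.sq_sqrt (by positivity)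
    field_simp
    nlinarith [hsq]
  rw [intervalIntegral.integral_eq_sub_of_hasDerivAt key
    ((cont_sqrt c).intervalIntegrable 0 lam)]
  simp only [zero_add, zero_mul, zero_pow, zero_div]
  norm_num
  ring

private lemma integ_slope (c lam : ℝ) (hc : 0 < c) :
    ∫ x in (0:ℝ)..lam, (c + 2*x^2) / (2 * Real.sqrt (c + x^2))
      = lam * Real.sqrt (c + lam^2) / 2 := by
  have key : ∀ x ∈ Set.uIcc (0:ℝ) lam,
      HasDerivAt (fun y : ℝ => y * Real.sqrt (c + y^2) / 2)
        ((c + 2*x^2) / (2 * Real.sqrt (c + x^2))) x := by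
    intro x _
    have h := (hd_xsqrt c hc x).div_const 2
    refine h.congr_deriv (Eq.symm ?_)
    rw [div_div]
    ring_nf
  rw [intervalIntegral.integral_eq_sub_of_hasDerivAt key
    ((cont_slope c hc).intervalIntegrable 0 lam)]
  norm_num

private lemma integ_inv (c lam : ℝ) (hc : 0 < c) :
    ∫ x in (0:ℝ)..lam, 1 / Real.sqrt (c + x^2)
      = Real.log (lam + Real.sqrt (c + lam^2)) - Real.log (Real.sqrt c) := by
  have key : ∀ x ∈ Set.uIcc (0:ℝ) lam,
      HasDerivAt (fun y : ℝ => Real.log (y + Real.sqrt (c + y^2)))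
        (1 / Real.sqrt (c + x^2)) x := fun x _ => hd_logsqrt c hc x
  rw [intervalIntegral.integral_eq_sub_of_hasDerivAt key
    ((cont_inv c hc).intervalIntegrable 0 lam)]
  norm_num

/-- tangent bound, branch 1 : concavity of `u ↦ √(cvu + u²x²)` at `u = v`. -/
private lemma tangent1 (c v u x : ℝ) (hc : 0 < c) (hv : 0 < v) (hu : 0 ≤ u) :
    Real.sqrt (c*v*u + u^2*x^2) ≤
      v * Real.sqrt (c + x^2) + (u - v) * ((c + 2*x^2) / (2 * Real.sqrt (c + x^2))) := by
  have hSpos : 0 < Real.sqrt (c + x^2) := sqrt_cx_pos c x hc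
  have hS2 : Real.sqrt (c + x^2)^2 = c + x^2 := Real.sq_sqrt (by positivity)
  set S := Real.sqrt (c + x^2) with hS
  have hR : v * S + (u - v) * ((c + 2*x^2) / (2*S))
      = (c*v/2 + c*u/2 + u*x^2) / S := by
    field_simp
    nlinarith [hS2]
  rw [hR]
  have hRnum : 0 ≤ c*v/2 + c*u/2 + u*x^2 := by positivity
  have hRnn : 0 ≤ (c*v/2 + c*u/2 + u*x^2) / S := by positivity
  rw [show (c*v/2 + c*u/2 + u*x^2)/S
      = Real.sqrt (((c*v/2 + c*u/2 + u*x^2)/S)^2) from (Real.sqrt_sq hRnn).symm]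
  apply Real.sqrt_le_sqrt
  rw [div_pow, hS2, le_div_iff₀ (by positivity : (0:ℝ) < c + x^2)]
  nlinarith [sq_nonneg (c*(u - v)), sq_nonneg x, mul_nonneg hu (sq_nonneg x)]

/-- tangent bound, branch 2 : concavity of `σ ↦ √(4σt + t²x²)` at `σ = ct/4`. -/
private lemma tangent2 (c t σ x : ℝ) (hc : 0 < c) (ht : 0 < t) (hσ : 0 ≤ σ) :
    Real.sqrt (4*σ*t + t^2*x^2) ≤
      t * Real.sqrt (c + x^2) + (σ - c*t/4) * 2 * (1 / Real.sqrt (c + x^2)) := by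
  have hSpos : 0 < Real.sqrt (c + x^2) := sqrt_cx_pos c x hc
  have hS2 : Real.sqrt (c + x^2)^2 = c + x^2 := Real.sq_sqrt (by positivity)
  set S := Real.sqrt (c + x^2) with hS
  have hR : t * S + (σ - c*t/4) * 2 * (1/S) = (c*t/2 + t*x^2 + 2*σ) / S := by
    field_simp
    linear_combination 8*t*hS2
  rw [hR]
  have hRnum : 0 ≤ c*t/2 + t*x^2 + 2*σ := by positivity
  have hRnn : 0 ≤ (c*t/2 + t*x^2 + 2*σ) / S := by positivity
  rw [show (c*t/2 + t*x^2 + 2*σ)/S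
      = Real.sqrt (((c*t/2 + t*x^2 + 2*σ)/S)^2) from (Real.sqrt_sq hRnn).symm]
  apply Real.sqrt_le_sqrt
  rw [div_pow, hS2, le_div_iff₀ (by positivity : (0:ℝ) < c + x^2)]
  nlinarith [sq_nonneg (c*t - 4*σ), sq_nonneg x, mul_nonneg hσ (sq_nonneg x)]

/-- evaluation : `Lam a b lam = b·∫√(c+x²)` when `4a = cb`. -/
private lemma Lam_eval (a b c lam : ℝ) (hb : 0 < b) (hc : 0 < c) (h : 4*a = c*b) :
    Lam a b lam = b * (lam * Real.sqrt (c + lam^2) / 2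
        + c/2 * (Real.log (lam + Real.sqrt (c + lam^2)) - Real.log (Real.sqrt c))) := by
  rw [Lam, ← integ_sqrt c lam hc, ← intervalIntegral.integral_const_mul]
  apply intervalIntegral.integral_congr
  intro x _
  show Real.sqrt (4*a*b + (b*x)^2) = b * Real.sqrt (c + x^2)
  have he : 4*a*b + (b*x)^2 = b^2 * (c + x^2) := by linear_combination b * h
  rw [he, Real.sqrt_mul (sq_nonneg b), Real.sqrt_sq hb.le]

/-- upper bound, branch 1. -/
private lemma upper1 (c v s u lam : ℝ) (hc : 0 < c) (hv : 0 < v) (hu : 0 ≤ u)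
    (hlam : 0 < lam) (hs : 4*s = c*v) :
    Lam s u lam ≤ v * (lam * Real.sqrt (c + lam^2) / 2
        + c/2 * (Real.log (lam + Real.sqrt (c + lam^2)) - Real.log (Real.sqrt c)))
      + (u - v) * (lam * Real.sqrt (c + lam^2) / 2) := by
  have h1 : Lam s u lam ≤ ∫ x in (0:ℝ)..lam,
      (v * Real.sqrt (c + x^2) + (u - v) * ((c + 2*x^2) / (2 * Real.sqrt (c + x^2)))) := by
    rw [Lam]
    apply intervalIntegral.integral_mono_on hlam.le
    · exact (Real.continuous_sqrt.comp (by continuity)).intervalIntegrable 0 lam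
    · exact ((continuous_const.mul (cont_sqrt c)).add
        (continuous_const.mul (cont_slope c hc))).intervalIntegrable 0 lam
    · intro x _
      have he : 4*s*u + (u*x)^2 = c*v*u + u^2*x^2 := by linear_combination u * hs
      rw [he]
      exact tangent1 c v u x hc hv hu
  calc Lam s u lam ≤ _ := h1
    _ = v * (∫ x in (0:ℝ)..lam, Real.sqrt (c + x^2))
        + (u - v) * ∫ x in (0:ℝ)..lam, (c + 2*x^2) / (2 * Real.sqrt (c + x^2)) := by
        rw [intervalIntegral.integral_add (f := fun x => v * Real.sqrt (c + x^2))
          (g := fun x => (u - v) * ((c + 2*x^2) / (2 * Real.sqrt (c + x^2))))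
          ((continuous_const.mul (cont_sqrt c)).intervalIntegrable 0 lam)
          ((continuous_const.mul (cont_slope c hc)).intervalIntegrable 0 lam),
          intervalIntegral.integral_const_mul, intervalIntegral.integral_const_mul]
    _ = _ := by rw [integ_sqrt c lam hc, integ_slope c lam hc]

/-- upper bound, branch 2. -/
private lemma upper2 (c t σ lam : ℝ) (hc : 0 < c) (ht : 0 < t) (hσ : 0 ≤ σ)
    (hlam : 0 < lam) :
    Lam σ t lam ≤ t * (lam * Real.sqrt (c + lam^2) / 2
        + c/2 * (Real.log (lam + Real.sqrt (c + lam^2)) - Real.log (Real.sqrt c)))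
      + (σ - c*t/4) * 2 * (Real.log (lam + Real.sqrt (c + lam^2)) - Real.log (Real.sqrt c)) := by
  have h1 : Lam σ t lam ≤ ∫ x in (0:ℝ)..lam,
      (t * Real.sqrt (c + x^2) + (σ - c*t/4) * 2 * (1 / Real.sqrt (c + x^2))) := by
    rw [Lam]
    apply intervalIntegral.integral_mono_on hlam.le
    · exact (Real.continuous_sqrt.comp (by continuity)).intervalIntegrable 0 lam
    · exact ((continuous_const.mul (cont_sqrt c)).add
        (continuous_const.mul (cont_inv c hc))).intervalIntegrable 0 lam
    · intro x _
      have he : 4*σ*t + (t*x)^2 = 4*σ*t + t^2*x^2 := by ring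
      rw [he]
      exact tangent2 c t σ x hc ht hσ
  calc Lam σ t lam ≤ _ := h1
    _ = t * (∫ x in (0:ℝ)..lam, Real.sqrt (c + x^2))
        + (σ - c*t/4) * 2 * ∫ x in (0:ℝ)..lam, 1 / Real.sqrt (c + x^2) := by
        rw [intervalIntegral.integral_add (f := fun x => t * Real.sqrt (c + x^2))
          (g := fun x => (σ - c*t/4) * 2 * (1 / Real.sqrt (c + x^2)))
          ((continuous_const.mul (cont_sqrt c)).intervalIntegrable 0 lam)
          ((continuous_const.mul (cont_inv c hc)).intervalIntegrable 0 lam),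
          intervalIntegral.integral_const_mul, intervalIntegral.integral_const_mul]
    _ = _ := by rw [integ_sqrt c lam hc, integ_inv c lam hc]

set_option maxHeartbeats 1000000 in
theorem stationary_lyapunov_variational_identity (μ lam s t : ℝ) (hμ : 0 < μ)
    (hlam : 0 < lam) (hlt : lam < μ) (hs : 0 < s) (ht : 0 < t) :
    max (t * (lam ^ 2 / 2 + μ * lam) + s * Real.log ((μ + lam) / μ))
        (t * (-(lam ^ 2) / 2 + μ * lam) + s * Real.log (μ / (μ - lam))) =
      max
        (sSup {y : ℝ | ∃ r ∈ Set.Icc (0:ℝ) t,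
          y = r * (lam * μ + lam ^ 2 / 2) + Lam s (t - r) lam})
        (sSup {y : ℝ | ∃ u ∈ Set.Icc (0:ℝ) s,
          y = u * Real.log (μ / (μ - lam)) + Lam (s - u) t lam}) := by
  have hmm1 : 0 < μ + lam := by linarith
  have hmm2 : 0 < μ - lam := by linarith
  have hc1 : (0:ℝ) < 4*μ*(μ+lam) := by positivity
  have hc2 : (0:ℝ) < 4*μ*(μ-lam) := by positivity
  -- sqrt simplifications
  have hsq1 : Real.sqrt (4*μ*(μ+lam) + lam^2) = 2*μ + lam := by
    rw [show 4*μ*(μ+lam) + lam^2 = (2*μ+lam)^2 by ring]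
    exact Real.sqrt_sq (by linarith)
  have hsq2 : Real.sqrt (4*μ*(μ-lam) + lam^2) = 2*μ - lam := by
    rw [show 4*μ*(μ-lam) + lam^2 = (2*μ-lam)^2 by ring]
    exact Real.sqrt_sq (by linarith)
  -- log simplifications
  have hlog1 : Real.log (lam + Real.sqrt (4*μ*(μ+lam) + lam^2))
      - Real.log (Real.sqrt (4*μ*(μ+lam)))
      = (Real.log (μ+lam) - Real.log μ) / 2 := by
    rw [hsq1, Real.log_sqrt hc1.le, show lam + (2*μ+lam) = 2*(μ+lam) by ring,
      Real.log_mul two_ne_zero hmm1.ne',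
      show 4*μ*(μ+lam) = 2^2*(μ*(μ+lam)) by ring,
      Real.log_mul (by norm_num) (by positivity), Real.log_pow,
      Real.log_mul hμ.ne' hmm1.ne']
    push_cast
    ring
  have hlog2 : Real.log (lam + Real.sqrt (4*μ*(μ-lam) + lam^2))
      - Real.log (Real.sqrt (4*μ*(μ-lam)))
      = (Real.log μ - Real.log (μ-lam)) / 2 := by
    rw [hsq2, Real.log_sqrt hc2.le, show lam + (2*μ-lam) = 2*μ by ring,
      Real.log_mul two_ne_zero hμ.ne',
      show 4*μ*(μ-lam) = 2^2*(μ*(μ-lam)) by ring,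
      Real.log_mul (by norm_num) (by positivity), Real.log_pow,
      Real.log_mul hμ.ne' hmm2.ne']
    push_cast
    ring
  simp only [Real.log_div hmm1.ne' hμ.ne', Real.log_div hμ.ne' hmm2.ne']
  set Lp := Real.log (μ+lam) - Real.log μ with hLp
  set L := Real.log μ - Real.log (μ-lam) with hL
  set A := t * (lam ^ 2 / 2 + μ * lam) + s * Lp with hA
  set B := t * (-(lam ^ 2) / 2 + μ * lam) + s * L with hB
  set v0 := s / (μ*(μ+lam)) with hv0def
  have hv0 : 0 < v0 := by positivity
  have hkey1 : 4*s = (4*μ*(μ+lam)) * v0 := by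
    rw [hv0def]; field_simp
  have hv0s : v0 * (μ*(μ+lam)) = s := by rw [hv0def]; field_simp
  -- branch 1 : pointwise upper bound
  have hub1 : ∀ r ∈ Set.Icc (0:ℝ) t,
      r * (lam * μ + lam ^ 2 / 2) + Lam s (t - r) lam ≤ A := by
    intro r hr
    have h := upper1 (4*μ*(μ+lam)) v0 s (t-r) lam hc1 hv0 (by linarith [hr.2]) hlam hkey1
    rw [hlog1, hsq1] at h
    have : r * (lam * μ + lam ^ 2 / 2)
        + (v0 * (lam * (2*μ+lam) / 2 + 4*μ*(μ+lam)/2 * ((Lp)/2))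
          + (t - r - v0) * (lam * (2*μ+lam) / 2)) = A := by
      rw [hA]
      linear_combination Lp * hv0s
    linarith [h]
  -- branch 1 : value attained when v0 ≤ t
  have hmem1 : v0 ≤ t → A = (t - v0) * (lam * μ + lam ^ 2 / 2) + Lam s (t - (t - v0)) lam := by
    intro _
    rw [show t - (t - v0) = v0 by ring,
      Lam_eval s v0 (4*μ*(μ+lam)) lam hv0 hc1 hkey1, hlog1, hsq1, hA]
    linear_combination (-Lp) * hv0s
  -- branch 2 : pointwise upper bound
  have hub2 : ∀ u ∈ Set.Icc (0:ℝ) s,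
      u * L + Lam (s - u) t lam ≤ B := by
    intro u hu
    have h := upper2 (4*μ*(μ-lam)) t (s-u) lam hc2 ht (by linarith [hu.2]) hlam
    rw [hlog2, hsq2] at h
    have : u * L + (t * (lam * (2*μ-lam) / 2 + 4*μ*(μ-lam)/2 * ((L)/2))
        + (s - u - 4*μ*(μ-lam)*t/4) * 2 * ((L)/2)) = B := by
      rw [hB]; ring
    exact le_of_le_of_eq (add_le_add_right h (u * L)) this
  -- branch 2 : value attained when μ(μ-lam)t ≤ s
  have hmem2 : μ*(μ-lam)*t ≤ s →
      B = (s - μ*(μ-lam)*t) * L + Lam (s - (s - μ*(μ-lam)*t)) t lam := by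
    intro _
    rw [show s - (s - μ*(μ-lam)*t) = μ*(μ-lam)*t by ring,
      Lam_eval (μ*(μ-lam)*t) t (4*μ*(μ-lam)) lam ht hc2 (by ring), hlog2, hsq2, hB]
    ring
  -- comparison inequalities
  have hAB : t*(μ*(μ+lam)) ≤ s → A ≤ B := by
    intro h
    have hx : (0:ℝ) < (μ^2 - lam^2)/μ^2 := div_pos (by nlinarith) (by positivity)
    have h1 := Real.log_le_sub_one_of_pos hx
    rw [Real.log_div (by nlinarith) (by positivity),
      show μ^2 - lam^2 = (μ+lam)*(μ-lam) by ring,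
      Real.log_mul hmm1.ne' hmm2.ne',
      show (μ:ℝ)^2 = μ*μ by ring, Real.log_mul hμ.ne' hμ.ne'] at h1
    have h4 : ((μ+lam)*(μ-lam))/(μ*μ) - 1 = -(lam^2/(μ*μ)) := by
      field_simp; ring
    rw [h4] at h1
    have h5 : (μ*μ) * (Real.log (μ+lam) + Real.log (μ-lam) - (Real.log μ + Real.log μ))
        ≤ -lam^2 := by
      have h6 := mul_le_mul_of_nonneg_left h1 (by positivity : (0:ℝ) ≤ μ*μ)
      calc (μ*μ) * (Real.log (μ+lam) + Real.log (μ-lam) - (Real.log μ + Real.log μ))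
          ≤ (μ*μ) * (-(lam^2/(μ*μ))) := h6
        _ = -lam^2 := by field_simp
    have h7 := mul_le_mul_of_nonneg_left h5 hs.le
    have h8 := mul_le_mul_of_nonneg_right h (sq_nonneg lam)
    rw [hA, hB, hLp, hL]
    nlinarith [h7, h8, mul_pos (mul_pos hμ hμ) (mul_pos ht hlam), mul_pos hμ hlam,
      mul_pos (mul_pos ht hμ) (mul_pos hlam (mul_pos hlam hlam))]
  have hBA : s ≤ t*(μ*(μ-lam)) → B ≤ A := by
    intro h
    have hml : (0:ℝ) < (μ+lam)*(μ-lam) := by positivity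
    have hx : (0:ℝ) < μ^2/((μ+lam)*(μ-lam)) := by positivity
    have h1 := Real.log_le_sub_one_of_pos hx
    rw [Real.log_div (by positivity) hml.ne',
      Real.log_mul hmm1.ne' hmm2.ne',
      show (μ:ℝ)^2 = μ*μ by ring, Real.log_mul hμ.ne' hμ.ne'] at h1
    have h4 : μ*μ/((μ+lam)*(μ-lam)) - 1 = lam^2/((μ+lam)*(μ-lam)) := by
      field_simp; ring
    rw [h4] at h1
    have h5 : ((μ+lam)*(μ-lam)) * (Real.log μ + Real.log μ
        - (Real.log (μ+lam) + Real.log (μ-lam))) ≤ lam^2 := by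
      have h6 := mul_le_mul_of_nonneg_left h1 hml.le
      calc ((μ+lam)*(μ-lam)) * (Real.log μ + Real.log μ
          - (Real.log (μ+lam) + Real.log (μ-lam)))
          ≤ ((μ+lam)*(μ-lam)) * (lam^2/((μ+lam)*(μ-lam))) := h6
        _ = lam^2 := by field_simp
    have h7 := mul_le_mul_of_nonneg_left h5 hs.le
    have h8 := mul_le_mul_of_nonneg_right h (sq_nonneg lam)
    rw [hA, hB, hLp, hL]
    nlinarith [h7, h8, hml, mul_pos (mul_pos ht hmm2) (mul_pos hlam (mul_pos hlam hlam))]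
  -- suprema
  set P := {y : ℝ | ∃ r ∈ Set.Icc (0:ℝ) t,
      y = r * (lam * μ + lam ^ 2 / 2) + Lam s (t - r) lam} with hPdef
  set Q := {y : ℝ | ∃ u ∈ Set.Icc (0:ℝ) s,
      y = u * L + Lam (s - u) t lam} with hQdef
  have hPub : ∀ y ∈ P, y ≤ A := by
    rintro y ⟨r, hr, rfl⟩; exact hub1 r hr
  have hQub : ∀ y ∈ Q, y ≤ B := by
    rintro y ⟨u, hu, rfl⟩; exact hub2 u hu
  have hPne : P.Nonempty :=
    ⟨0 * (lam * μ + lam ^ 2 / 2) + Lam s (t - 0) lam, 0, ⟨le_refl 0, ht.le⟩, rfl⟩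
  have hQne : Q.Nonempty :=
    ⟨0 * L + Lam (s - 0) t lam, 0, ⟨le_refl 0, hs.le⟩, rfl⟩
  have hPle : sSup P ≤ A := csSup_le hPne hPub
  have hQle : sSup Q ≤ B := csSup_le hQne hQub
  have hPA : v0 ≤ t → sSup P = A := by
    intro hvt
    refine le_antisymm hPle (le_csSup ⟨A, hPub⟩ ?_)
    exact ⟨t - v0, ⟨by linarith, by linarith⟩, hmem1 hvt⟩
  have hQB : μ*(μ-lam)*t ≤ s → sSup Q = B := by
    intro hσs
    refine le_antisymm hQle (le_csSup ⟨B, hQub⟩ ?_)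
    refine ⟨s - μ*(μ-lam)*t, ⟨by linarith, by nlinarith [mul_pos (mul_pos hμ hmm2) ht]⟩,
      hmem2 hσs⟩
  -- case analysis
  by_cases hvt : v0 ≤ t
  · by_cases hσs : μ*(μ-lam)*t ≤ s
    · rw [hPA hvt, hQB hσs]
    · push_neg at hσs
      have hba : B ≤ A := hBA (by nlinarith)
      rw [hPA hvt, max_eq_left hba, max_eq_left (le_trans hQle hba)]
  · push_neg at hvt
    have hsgt : t*(μ*(μ+lam)) ≤ s := by
      rw [hv0def] at hvt
      have := (lt_div_iff₀ (by positivity : (0:ℝ) < μ*(μ+lam))).1 hvt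
      linarith
    have hab : A ≤ B := hAB hsgt
    have hσs : μ*(μ-lam)*t ≤ s := by nlinarith [mul_pos (mul_pos hμ hlam) ht]
    rw [hQB hσs, max_eq_right hab, max_eq_right (le_trans hPle hab)]
end
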